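/- Let X, Y be complex Banach spaces and T, A : X → Y bounded linear operators with T ≠ 0 and T ⊥_B A. Then either (a) there exists a sequence {xₙ} of unit vectors with ‖Txₙ‖ → ‖T‖ and ‖Axₙ‖ → 0, or (b) for each unimodular α with arg α ∈ [0,π) there exist sequences {xₙ}, {yₙ} of unit vectors and positive reals εₙ → 0, δₙ → 0 such that ‖Txₙ‖ → ‖T‖, ‖Tyₙ‖ → ‖T‖, and for all n: ‖Txₙ + tαAxₙ‖ ≥ √(1−εₙ²)‖Txₙ‖ for all t ≥ 0 and ‖Tyₙ + tαAyₙ‖ ≥ √(1−δₙ²)‖Tyₙ‖ for all t ≤ 0. -/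

import Mathlib

open Filter Topology

lemma chord {Y : Type*} [NormedAddCommGroup Y] [NormedSpace ℂ Y]
    (u w : Y) {s t : ℝ} (hs : 0 < s) (hst : s ≤ t) :
    t * ‖u + (s:ℂ) • w‖ ≤ (t - s) * ‖u‖ + s * ‖u + (t:ℂ) • w‖ := by
  have ht : 0 < t := hs.trans_le hst
  have htc : (t:ℂ) ≠ 0 := by exact_mod_cast ht.ne'
  have hid : u + (s:ℂ) • w
      = (((t - s)/t : ℝ) : ℂ) • u + ((s/t : ℝ) : ℂ) • (u + (t:ℂ) • w) := by
    push_cast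
    match_scalars
    · field_simp
      ring
    · field_simp
  have hb : ‖u + (s:ℂ) • w‖ ≤ ((t-s)/t) * ‖u‖ + (s/t) * ‖u + (t:ℂ) • w‖ := by
    rw [hid]
    refine (norm_add_le _ _).trans ?_
    rw [norm_smul, norm_smul, Complex.norm_real, Complex.norm_real,
      Real.norm_eq_abs, Real.norm_eq_abs,
      abs_of_nonneg (div_nonneg (by linarith) ht.le),
      abs_of_nonneg (div_nonneg hs.le ht.le)]
  have h2 : t * (((t-s)/t) * ‖u‖ + (s/t) * ‖u + (t:ℂ) • w‖)
      = (t-s) * ‖u‖ + s * ‖u + (t:ℂ) • w‖ := by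
    field_simp
  nlinarith [mul_le_mul_of_nonneg_left hb ht.le]

set_option maxHeartbeats 1000000 in
lemma key {X Y : Type*} [NormedAddCommGroup X] [NormedSpace ℂ X]
    [NormedAddCommGroup Y] [NormedSpace ℂ Y]
    (T A : X →L[ℂ] Y) (hT : 0 < ‖T‖)
    (horth : ∀ lam : ℂ, ‖T + lam • A‖ ≥ ‖T‖)
    {ε₀ d : ℝ} (hε₀ : 0 < ε₀) (hd : 0 < d)
    (H : ∀ x : X, ‖x‖ = 1 → ‖T‖ - ε₀ < ‖T x‖ → d ≤ ‖A x‖)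
    (β : ℂ) (hβ : ‖β‖ = 1) :
    ∃ (x : ℕ → X) (ε : ℕ → ℝ),
      (∀ n, ‖x n‖ = 1) ∧ (∀ n, 0 < ε n) ∧ Tendsto ε atTop (𝓝 0) ∧
      Tendsto (fun n => ‖T (x n)‖) atTop (𝓝 ‖T‖) ∧
      (∀ n, ∀ t : ℝ, 0 ≤ t →
        ‖T (x n) + ((t : ℂ) * β) • A (x n)‖ ≥ Real.sqrt (1 - (ε n) ^ 2) * ‖T (x n)‖) := by
  have hA0 : (0:ℝ) ≤ ‖A‖ := norm_nonneg _
  set m := min ε₀ (‖T‖/2) with hm_def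
  have hm : 0 < m := lt_min hε₀ (by linarith)
  set s₀ := min 1 (m / (2*(1+‖A‖))) with hs₀_def
  have hs₀ : 0 < s₀ := lt_min one_pos (by positivity)
  have hs₀1 : s₀ ≤ 1 := min_le_left _ _
  have hs₀m : s₀ * (1+‖A‖) ≤ m/2 := by
    have h1 : s₀ ≤ m / (2*(1+‖A‖)) := min_le_right _ _
    have h2 : (0:ℝ) < 1+‖A‖ := by linarith
    have h3 : (m / (2*(1+‖A‖)))*(1+‖A‖) = m/2 := by field_simp
    nlinarith [mul_le_mul_of_nonneg_right h1 h2.le]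
  set s : ℕ → ℝ := fun n => s₀ * (1/(n+1)) with hs_def
  have hspos : ∀ n, 0 < s n := fun n => by positivity
  have hsle : ∀ n, s n ≤ s₀ := by
    intro n
    have h1 : (1:ℝ)/(n+1) ≤ 1 := by
      rw [div_le_one (by positivity)]
      linarith [Nat.cast_nonneg (α := ℝ) n]
    calc s₀ * (1/(n+1)) ≤ s₀ * 1 := by nlinarith
    _ = s₀ := mul_one _
  have hsmall : ∀ n, (s n)^2 + s n * ‖A‖ < m := by
    intro n
    have h1 : s n ≤ 1 := (hsle n).trans hs₀1
    nlinarith [hspos n, hsle n, mul_le_mul_of_nonneg_right (hsle n) hA0,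
      mul_le_mul_of_nonneg_left h1 (hspos n).le]
  have hmT : m ≤ ‖T‖/2 := min_le_right _ _
  have hmε : m ≤ ε₀ := min_le_left _ _
  -- per n existence of near-norming vectors for T + s n β A
  have hex : ∀ n, ∃ x : X, ‖x‖ = 1 ∧
      ‖T‖ - (s n)^2 < ‖T x + ((s n : ℂ) * β) • A x‖ := by
    intro n
    set B := T + ((s n : ℂ)*β) • A with hB_def
    have hB : ‖T‖ ≤ ‖B‖ := horth _
    have hsq : (s n)^2 < m := by nlinarith [hsmall n, mul_nonneg (hspos n).le hA0]
    have hr : ‖T‖ - (s n)^2 < ‖B‖ := by nlinarith [hspos n]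
    obtain ⟨z, hz1, hz2⟩ := B.exists_lt_apply_of_lt_opNorm hr
    have hr0 : 0 < ‖T‖ - (s n)^2 := by linarith
    have hz0 : z ≠ 0 := by
      rintro rfl
      simp only [map_zero, norm_zero] at hz2
      linarith
    have hzn : 0 < ‖z‖ := norm_pos_iff.mpr hz0
    refine ⟨‖z‖⁻¹ • z, ?_, ?_⟩
    · rw [norm_smul, norm_inv, norm_norm]
      field_simp
    · have hBx : T (‖z‖⁻¹ • z) + ((s n:ℂ)*β) • A (‖z‖⁻¹ • z) = ‖z‖⁻¹ • (B z) := by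
        rw [hB_def]
        simp only [ContinuousLinearMap.add_apply, ContinuousLinearMap.coe_smul',
          Pi.smul_apply, ContinuousLinearMap.map_smul_of_tower, smul_add]
        rw [smul_comm]
      rw [hBx, norm_smul, norm_inv, norm_norm]
      have hinv : 1 ≤ ‖z‖⁻¹ := (one_le_inv₀ hzn).mpr hz1.le
      nlinarith [hz2]
  choose x hx1 hx2 using hex
  have hTxub : ∀ n, ‖T (x n)‖ ≤ ‖T‖ := by
    intro n
    have := T.le_opNorm (x n)
    rw [hx1 n, mul_one] at this
    exact this
  have hAxub : ∀ n, ‖A (x n)‖ ≤ ‖A‖ := by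
    intro n
    have := A.le_opNorm (x n)
    rw [hx1 n, mul_one] at this
    exact this
  have hnc : ∀ n, ∀ r : ℝ, 0 ≤ r → ‖((r:ℂ)*β) • A (x n)‖ = r * ‖A (x n)‖ := by
    intro n r hr
    rw [norm_smul, norm_mul, Complex.norm_real, hβ, Real.norm_eq_abs,
      abs_of_nonneg hr, mul_one]
  have hTxlb : ∀ n, ‖T‖ - ((s n)^2 + s n * ‖A‖) ≤ ‖T (x n)‖ := by
    intro n
    have h1 := hx2 n
    have h2 := norm_add_le (T (x n)) (((s n:ℂ)*β) • A (x n))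
    rw [hnc n _ (hspos n).le] at h2
    have h3 : s n * ‖A (x n)‖ ≤ s n * ‖A‖ :=
      mul_le_mul_of_nonneg_left (hAxub n) (hspos n).le
    linarith
  have hTxm : ∀ n, ‖T‖ - m < ‖T (x n)‖ := by
    intro n
    have := hsmall n
    have := hTxlb n
    linarith
  have hTxpos : ∀ n, ‖T‖/2 < ‖T (x n)‖ := by
    intro n
    have := hTxm n
    linarith
  have hAxlb : ∀ n, d ≤ ‖A (x n)‖ := by
    intro n
    exact H _ (hx1 n) (by linarith [hTxm n])
  set K := max ‖A‖ (2*‖T‖/d) with hK_def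
  have hK : 0 < K := lt_of_lt_of_le (by positivity) (le_max_right _ _)
  have hKA : ‖A‖ ≤ K := le_max_left _ _
  have hKR : 2*‖T‖/d ≤ K := le_max_right _ _
  -- main pointwise bound
  have hmain : ∀ n, ∀ t : ℝ, 0 ≤ t →
      ‖T (x n)‖ - K * s n ≤ ‖T (x n) + ((t:ℂ)*β) • A (x n)‖ := by
    intro n t ht
    have hAx := hAxlb n
    have hAu := hAxub n
    have hnct := hnc n t ht
    rcases le_or_gt t (s n) with hcase | hcase
    · -- small t
      have h1 : ‖T (x n)‖ ≤ ‖T (x n) + ((t:ℂ)*β) • A (x n)‖ + ‖((t:ℂ)*β) • A (x n)‖ := by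
        have := norm_add_le (T (x n) + ((t:ℂ)*β) • A (x n)) (-(((t:ℂ)*β) • A (x n)))
        simpa using this
      rw [hnct] at h1
      have h2 : t * ‖A (x n)‖ ≤ s n * ‖A‖ :=
        mul_le_mul hcase (hAxub n) (norm_nonneg _) (hspos n).le
      linarith [mul_le_mul_of_nonneg_left hKA (hspos n).le]
    · rcases le_or_gt t (2*‖T‖/d) with hcase2 | hcase2
      · -- middle: convexity
        have hch := chord (T (x n)) (β • A (x n)) (hspos n) hcase.le
        rw [smul_smul, smul_smul] at hch
        have hs2 : ‖T‖ - (s n)^2 < ‖T (x n) + ((s n:ℂ)*β) • A (x n)‖ := hx2 n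
        have hub := hTxub n
        -- derive  ‖u‖ - s n * t ≤ g
        have htpos : 0 < t := (hspos n).trans hcase
        have h3 : s n * (‖T (x n)‖ - s n * t) ≤ s n * ‖T (x n) + ((t:ℂ)*β) • A (x n)‖ := by
          nlinarith [hch, mul_le_mul_of_nonneg_left hs2.le htpos.le,
            mul_le_mul_of_nonneg_left hub htpos.le]
        have h4 : ‖T (x n)‖ - s n * t ≤ ‖T (x n) + ((t:ℂ)*β) • A (x n)‖ :=
          le_of_mul_le_mul_left h3 (hspos n)
        have h5 : s n * t ≤ K * s n := by
          have : t ≤ K := hcase2.trans hKR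
          nlinarith [hspos n]
        linarith
      · -- large t
        have h1 : ‖((t:ℂ)*β) • A (x n)‖ ≤ ‖T (x n) + ((t:ℂ)*β) • A (x n)‖ + ‖T (x n)‖ := by
          have := norm_add_le (T (x n) + ((t:ℂ)*β) • A (x n)) (-(T (x n)))
          simpa [add_comm] using this
        rw [hnct] at h1
        have h2 : 2*‖T‖ ≤ t * ‖A (x n)‖ := by
          have h3 : 2*‖T‖/d * d ≤ t * d := mul_le_mul_of_nonneg_right hcase2.le hd.le
          have h4 : 2*‖T‖/d * d = 2*‖T‖ := by field_simp
          nlinarith [mul_le_mul_of_nonneg_left hAx ht]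
        have := hTxub n
        nlinarith [mul_pos hK (hspos n)]
  -- tendsto of s
  have hstend : Tendsto s atTop (𝓝 0) := by
    have h := tendsto_one_div_add_atTop_nhds_zero_nat.const_mul s₀
    rw [mul_zero] at h
    exact h
  -- tendsto of ‖T x n‖
  have hTxtend : Tendsto (fun n => ‖T (x n)‖) atTop (𝓝 ‖T‖) := by
    have hlow : Tendsto (fun n => ‖T‖ - ((s n)^2 + s n * ‖A‖)) atTop (𝓝 ‖T‖) := by
      have h1 : Tendsto (fun n => (s n)^2 + s n * ‖A‖) atTop (𝓝 0) := by
        have h := (hstend.pow 2).add (hstend.mul_const ‖A‖)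
        convert h using 2
        norm_num
      have h2 := h1.const_sub ‖T‖
      convert h2 using 2
      norm_num
    exact tendsto_of_tendsto_of_tendsto_of_le_of_le hlow tendsto_const_nhds hTxlb hTxub
  -- the epsilon sequence
  set r : ℕ → ℝ := fun n => max 0 (1 - K * s n / ‖T (x n)‖) with hr_def
  set ε : ℕ → ℝ := fun n => Real.sqrt (1 - (r n)^2) with hε_def
  have hTn : ∀ n, 0 < ‖T (x n)‖ := fun n => lt_trans (by linarith) (hTxpos n)
  have hr0 : ∀ n, 0 ≤ r n := fun n => le_max_left _ _
  have hr1 : ∀ n, r n < 1 := by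
    intro n
    apply max_lt one_pos
    have : 0 < K * s n / ‖T (x n)‖ := div_pos (mul_pos hK (hspos n)) (hTn n)
    linarith
  have hεpos : ∀ n, 0 < ε n := by
    intro n
    apply Real.sqrt_pos.mpr
    nlinarith [hr0 n, hr1 n]
  have hεsq : ∀ n, Real.sqrt (1 - (ε n)^2) = r n := by
    intro n
    have h1 : (0:ℝ) ≤ 1 - (r n)^2 := by nlinarith [hr0 n, hr1 n]
    simp only [hε_def]
    rw [Real.sq_sqrt h1]
    rw [show (1 : ℝ) - (1 - (r n)^2) = (r n)^2 by ring]
    exact Real.sqrt_sq (hr0 n)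
  -- tendsto of r
  have hrtend : Tendsto r atTop (𝓝 1) := by
    have hρ : Tendsto (fun n => max 0 (1 - (2*K/‖T‖) * s n)) atTop (𝓝 1) := by
      have h1 : Tendsto (fun n => 1 - (2*K/‖T‖) * s n) atTop (𝓝 1) := by
        have h2 := (hstend.const_mul (2*K/‖T‖)).const_sub 1
        convert h2 using 2
        norm_num
      have h2 := (tendsto_const_nhds : Tendsto (fun _ : ℕ => (0:ℝ)) atTop (𝓝 0)).max h1
      simpa using h2
    apply tendsto_of_tendsto_of_tendsto_of_le_of_le hρ tendsto_const_nhds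
    · intro n
      apply max_le_max le_rfl
      have h1 : K * s n / ‖T (x n)‖ ≤ 2*K/‖T‖ * s n := by
        rw [div_le_iff₀ (hTn n)]
        have e : 2*K/‖T‖ * s n * (‖T‖/2) = K * s n := by field_simp
        nlinarith [mul_le_mul_of_nonneg_left (hTxpos n).le
          (le_of_lt (mul_pos (div_pos (by linarith [hK] : (0:ℝ) < 2*K) hT) (hspos n)))]
      linarith
    · intro n
      exact (hr1 n).le
  have hεtend : Tendsto ε atTop (𝓝 0) := by
    have h1 : Tendsto (fun n => 1 - (r n)^2) atTop (𝓝 0) := by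
      have h2 := (hrtend.pow 2).const_sub 1
      convert h2 using 2
      norm_num
    have h2 := (Real.continuous_sqrt.tendsto 0).comp h1
    rw [Real.sqrt_zero] at h2
    exact h2
  refine ⟨x, ε, hx1, hεpos, hεtend, hTxtend, ?_⟩
  intro n t ht
  rw [ge_iff_le, hεsq n]
  rcases le_or_gt (1 - K * s n / ‖T (x n)‖) 0 with hc | hc
  · have : r n = 0 := max_eq_left hc
    rw [this, zero_mul]
    exact norm_nonneg _
  · have hrn : r n = 1 - K * s n / ‖T (x n)‖ := max_eq_right hc.le
    have he : r n * ‖T (x n)‖ = ‖T (x n)‖ - K * s n := by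
      rw [hrn, sub_mul, one_mul, div_mul_cancel₀ _ (hTn n).ne']
    rw [he]
    exact hmain n t ht

theorem stmt_8 {X Y : Type*} [NormedAddCommGroup X] [NormedSpace ℂ X] [CompleteSpace X]
    [NormedAddCommGroup Y] [NormedSpace ℂ Y] [CompleteSpace Y]
    (T A : X →L[ℂ] Y) (hT : T ≠ 0)
    (horth : ∀ lam : ℂ, ‖T + lam • A‖ ≥ ‖T‖) :
    (∃ x : ℕ → X, (∀ n, ‖x n‖ = 1) ∧
      Tendsto (fun n => ‖T (x n)‖) atTop (𝓝 ‖T‖) ∧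
      Tendsto (fun n => ‖A (x n)‖) atTop (𝓝 0)) ∨
    (∀ α : ℂ, ‖α‖ = 1 → α.arg ∈ Set.Ico 0 Real.pi →
      ∃ (x y : ℕ → X) (ε δ : ℕ → ℝ),
        (∀ n, ‖x n‖ = 1) ∧ (∀ n, ‖y n‖ = 1) ∧
        (∀ n, 0 < ε n) ∧ (∀ n, 0 < δ n) ∧
        Tendsto ε atTop (𝓝 0) ∧ Tendsto δ atTop (𝓝 0) ∧
        Tendsto (fun n => ‖T (x n)‖) atTop (𝓝 ‖T‖) ∧
        Tendsto (fun n => ‖T (y n)‖) atTop (𝓝 ‖T‖) ∧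
        (∀ n, ∀ t : ℝ, 0 ≤ t →
          ‖T (x n) + ((t : ℂ) * α) • A (x n)‖ ≥ Real.sqrt (1 - (ε n) ^ 2) * ‖T (x n)‖) ∧
        (∀ n, ∀ t : ℝ, t ≤ 0 →
          ‖T (y n) + ((t : ℂ) * α) • A (y n)‖ ≥ Real.sqrt (1 - (δ n) ^ 2) * ‖T (y n)‖)) := by
  by_cases ha : (∃ x : ℕ → X, (∀ n, ‖x n‖ = 1) ∧
      Tendsto (fun n => ‖T (x n)‖) atTop (𝓝 ‖T‖) ∧
      Tendsto (fun n => ‖A (x n)‖) atTop (𝓝 0))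
  · exact Or.inl ha
  · right
    have hT0 : 0 < ‖T‖ := by
      rcases (norm_nonneg T).lt_or_eq with h | h
      · exact h
      · exact absurd ((ContinuousLinearMap.opNorm_zero_iff T).mp h.symm) hT
    have h10 : Tendsto (fun n : ℕ => 1/(n+1 : ℝ)) atTop (𝓝 0) :=
      tendsto_one_div_add_atTop_nhds_zero_nat
    obtain ⟨ε₀, hε₀, d, hd, H⟩ :
        ∃ ε₀ > 0, ∃ d > 0, ∀ x : X, ‖x‖ = 1 → ‖T‖ - ε₀ < ‖T x‖ → d ≤ ‖A x‖ := by
      by_contra hc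
      push_neg at hc
      apply ha
      have h := fun n : ℕ => hc (1/(n+1)) (by positivity) (1/(n+1)) (by positivity)
      choose z hz1 hz2 hz3 using h
      refine ⟨z, hz1, ?_, ?_⟩
      · apply tendsto_of_tendsto_of_tendsto_of_le_of_le
          (g := fun n : ℕ => ‖T‖ - 1/(n+1)) (h := fun _ : ℕ => ‖T‖)
        · have h2 := h10.const_sub ‖T‖
          convert h2 using 2
          norm_num
        · exact tendsto_const_nhds
        · exact fun n => (hz2 n).le
        · intro n
          have := T.le_opNorm (z n)
          rw [hz1 n, mul_one] at this
          exact this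
      · apply tendsto_of_tendsto_of_tendsto_of_le_of_le
          (g := fun _ : ℕ => (0:ℝ)) (h := fun n : ℕ => 1/(n+1 : ℝ))
        · exact tendsto_const_nhds
        · exact h10
        · exact fun n => norm_nonneg _
        · exact fun n => (hz3 n).le
    intro α hα _
    obtain ⟨x, ε, hx1, hε, hεt, hTx, hxineq⟩ := key T A hT0 horth hε₀ hd H α hα
    obtain ⟨y, δ, hy1, hδ, hδt, hTy, hyineq⟩ :=
      key T A hT0 horth hε₀ hd H (-α) (by simpa using hα)
    refine ⟨x, y, ε, δ, hx1, hy1, hε, hδ, hεt, hδt, hTx, hTy, hxineq, ?_⟩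
    intro n t ht
    have h := hyineq n (-t) (by linarith)
    have e : ((-t : ℝ) : ℂ) * (-α) = (t:ℂ)*α := by push_cast; ring
    rwa [e] at h
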